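/- Let X be a complete decomposition space. For any words v, v' over {0,1,a}, the subset X_{v0v'} equals the image of the degeneracy map s_{|v|} : X_{vv'} → X_{v1v'}. In particular, for 1 ≤ k ≤ n, the k-th principal edge of an n-simplex σ is degenerate if and only if σ = s_{k−1}(d_k(σ)). -/

import Mathlib

open CategoryTheory CategoryTheory.Limits Opposite

local notation "⦋" n "⦌" => SimplexCategory.mk n

local notation:1000 X " _⦋" n "⦌" => CategoryTheory.Functor.obj X (Opposite.op (SimplexCategory.mk n))

/-- A map in the simplex category is *generic* if it preserves the endpoints. -/
def IsGeneric {a b : SimplexCategory} (g : a ⟶ b) : Prop :=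
  g.toOrderHom 0 = 0 ∧ g.toOrderHom (Fin.last a.len) = Fin.last b.len

/-- A map in the simplex category is *free* if it is distance preserving. -/
def IsFree {a b : SimplexCategory} (f : a ⟶ b) : Prop :=
  ∀ i : Fin (a.len + 1), (f.toOrderHom i : ℕ) = (f.toOrderHom 0 : ℕ) + (i : ℕ)

/-- A decomposition space is a simplicial set carrying every pushout in `Δ` of a
generic map `g` along a free map `f` to a pullback of sets. -/
def IsDecomposition (X : SSet) : Prop :=
  ∀ ⦃a b c d : SimplexCategory⦄ (g : a ⟶ b) (f : a ⟶ c) (h : b ⟶ d) (k : c ⟶ d),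
    IsGeneric g → IsFree f → IsPushout g f h k →
    IsPullback (X.map h.op) (X.map k.op) (X.map g.op) (X.map f.op)

/-- A simplicial set is *complete* if all degeneracy maps are injective. -/
def Complete (X : SSet) : Prop :=
  ∀ (n : ℕ) (i : Fin (n + 1)), Function.Injective (X.σ i : X _⦋n⦌ ⟶ X _⦋n + 1⦌)

/-- The free map `[1] → [n]` sending `0, 1` to `i, i+1`; it induces the map
taking the `i`-th principal edge (`0`-indexed) of an `n`-simplex. -/
def principalEdge (n : ℕ) (i : Fin n) : (⦋1⦌ : SimplexCategory) ⟶ ⦋n⦌ :=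
  SimplexCategory.mkHom
    { toFun := fun j => ⟨i.1 + j.1, by have := i.2; have := j.2; omega⟩
      monotone' := fun a b h => by
        simp only [Fin.mk_le_mk]
        exact Nat.add_le_add_left h i.1 }

/-- The unique generic map `[1] → [n]` (`0 ↦ 0`, `1 ↦ n`); it induces the map
taking the long edge of an `n`-simplex. -/
def longEdgeMap (n : ℕ) : (⦋1⦌ : SimplexCategory) ⟶ ⦋n⦌ :=
  SimplexCategory.mkHom
    { toFun := fun j => ⟨j.1 * n, by
        have h := j.2
        have : j.1 * n ≤ 1 * n := Nat.mul_le_mul_right n (by omega)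
        omega⟩
      monotone' := fun a b h => by
        simp only [Fin.mk_le_mk]
        exact Nat.mul_le_mul_right n h }

/-- The alphabet `{0, 1, a}`: `z` prescribes a degenerate principal edge, `o` an
unrestricted one, `a` a nondegenerate one. -/
inductive Letter where
  | z : Letter
  | o : Letter
  | a : Letter
  deriving DecidableEq

/-- The subset of `X₁` prescribed by a letter. -/
def edgeSet (X : SSet) : Letter → Set (X _⦋1⦌)
  | .z => Set.range (X.σ (0 : Fin 1))
  | .o => Set.univ
  | .a => (Set.range (X.σ (0 : Fin 1)))ᶜ

/-- `X_w`, the set of `n`-simplices whose principal edges have the types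
prescribed by the word `w`. -/
def wordSet (X : SSet) {n : ℕ} (w : Fin n → Letter) : Set (X _⦋n⦌) :=
  {σ | ∀ i : Fin n, X.map (principalEdge n i).op σ ∈ edgeSet X (w i)}

/-- A simplex is *effective* if all its principal edges are nondegenerate. -/
def Effective (X : SSet) {n : ℕ} (σ : X _⦋n⦌) : Prop :=
  ∀ i : Fin n, X.map (principalEdge n i).op σ ∉ Set.range (X.σ (0 : Fin 1))

/-- The constant word `aa⋯a`. -/
def allA (n : ℕ) : Fin n → Letter := fun _ => Letter.a

/-- Concatenation of words. -/
def concatW {m n : ℕ} (v : Fin m → Letter) (v' : Fin n → Letter) : Fin (m + n) → Letter :=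
  fun i => if h : i.1 < m then v ⟨i.1, h⟩ else v' ⟨i.1 - m, by have := i.2; omega⟩

/-- The word `v ℓ v'` obtained by splicing a letter `ℓ` between the words `v` and `v'`. -/
def splice {m n : ℕ} (v : Fin m → Letter) (l : Letter) (v' : Fin n → Letter) :
    Fin (m + n + 1) → Letter :=
  fun i => if h : i.1 < m then v ⟨i.1, h⟩
    else if h2 : i.1 = m then l
    else v' ⟨i.1 - (m + 1), by have := i.2; omega⟩

/-- A simplex (of positive dimension) is degenerate if it is in the image of some
degeneracy map. -/
def Degen (X : SSet) {n : ℕ} (σ : X _⦋n + 1⦌) : Prop :=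
  ∃ i : Fin (n + 1), σ ∈ Set.range (X.σ i)

/-- A simplicial map is *cULF* if its naturality squares on all generic maps are
pullbacks. -/
def IsCULF {Y X : SSet} (f : Y ⟶ X) : Prop :=
  ∀ ⦃a b : SimplexCategory⦄ (g : a ⟶ b), IsGeneric g →
    IsPullback (f.app (op b)) (Y.map g.op) (X.map g.op) (f.app (op a))

/-- A simplicial map is *conservative* if its naturality squares on all degeneracy
maps are pullbacks. -/
def Conservative {Y X : SSet} (f : Y ⟶ X) : Prop :=
  ∀ (n : ℕ) (i : Fin (n + 1)),
    IsPullback (f.app (op (SimplexCategory.mk n))) (Y.σ i) (X.σ i)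
      (f.app (op (SimplexCategory.mk (n + 1))))

/-- A simplicial set is *stiff* if it carries every pushout in `Δ` of a codegeneracy
map along a free map to a pullback of sets. -/
def Stiff (X : SSet) : Prop :=
  ∀ (k : ℕ) (i : Fin (k + 1)) ⦃c d : SimplexCategory⦄
    (f : SimplexCategory.mk (k + 1) ⟶ c) (h : SimplexCategory.mk k ⟶ d) (j : c ⟶ d),
    IsFree f → IsPushout (SimplexCategory.σ i) f h j →
    IsPullback (X.map h.op) (X.map j.op) (X.map (SimplexCategory.σ i).op) (X.map f.op)

/-- The map `[0] → [n]` picking out the vertex `i`. -/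
def vertexMap (n : ℕ) (i : Fin (n + 1)) : (⦋0⦌ : SimplexCategory) ⟶ ⦋n⦌ :=
  SimplexCategory.mkHom ⟨fun _ => i, fun _ _ _ => le_refl _⟩

/-- The unique map `[n] → [0]`; it induces the iterated degeneracy `X₀ → Xₙ`. -/
def toZero (n : ℕ) : (⦋n⦌ : SimplexCategory) ⟶ ⦋0⦌ :=
  SimplexCategory.mkHom ⟨fun _ => 0, fun _ _ _ => le_refl _⟩

/-- The generic map `[2] → [m+n]` sending `0,1,2` to `0,m,m+n`. -/
def midMap (m n : ℕ) : (⦋2⦌ : SimplexCategory) ⟶ ⦋m + n⦌ :=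
  SimplexCategory.mkHom
    { toFun := fun j => ⟨if j.1 = 0 then 0 else if j.1 = 1 then m else m + n, by
        split
        · omega
        · split <;> omega⟩
      monotone' := by
        intro a b hab
        have h : a.1 ≤ b.1 := hab
        have ha := a.2
        have hb := b.2
        simp only [Fin.mk_le_mk]
        split <;> split <;> (try split) <;> (try split) <;> omega }

/-- The free map `[m] → [m+n]` onto the initial segment. -/
def freeInitial (m n : ℕ) : (⦋m⦌ : SimplexCategory) ⟶ ⦋m + n⦌ :=
  SimplexCategory.mkHom ⟨fun i => ⟨i.1, by have := i.2; omega⟩, fun a b h => h⟩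

/-- The free map `[n] → [m+n]` onto the final segment. -/
def freeFinal (m n : ℕ) : (⦋n⦌ : SimplexCategory) ⟶ ⦋m + n⦌ :=
  SimplexCategory.mkHom ⟨fun i => ⟨m + i.1, by have := i.2; omega⟩,
    fun a b h => by
      simp only [Fin.mk_le_mk]
      exact Nat.add_le_add_left h m⟩

/-- The word `1aa⋯a` (`n` letters `a`). -/
def oneA (n : ℕ) : Fin (n + 1) → Letter := fun i => if i.1 = 0 then Letter.o else Letter.a

/-- The word `0aa⋯a` (`n` letters `a`). -/
def zeroA (n : ℕ) : Fin (n + 1) → Letter := fun i => if i.1 = 0 then Letter.z else Letter.a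

/-- The word `aa⋯a1` (`n` letters `a`). -/
def aOne (n : ℕ) : Fin (n + 1) → Letter := fun i => if i.1 = n then Letter.o else Letter.a

/-- The word `aa⋯a0` (`n` letters `a`). -/
def aZero (n : ℕ) : Fin (n + 1) → Letter := fun i => if i.1 = n then Letter.z else Letter.a

/-- The number of letters `0` in a word. -/
def zcount {n : ℕ} (w : Fin n → Letter) : ℕ :=
  (Finset.univ.filter fun i => w i = Letter.z).card

/-- The surjection `[n] → [n - zcount w]` collapsing, for each position `j` with
`w j = 0`, the vertex `j+1` onto the vertex `j`; the induced map
`X_{n - zcount w} → X_n` is the iterated degeneracy `s_{j_k} ⋯ s_{j_1}` where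
`j_1 < ⋯ < j_k` are the positions of the letters `0` of `w`. -/
def collapseMap {n : ℕ} (w : Fin n → Letter) :
    (⦋n⦌ : SimplexCategory) ⟶ ⦋n - zcount w⦌ :=
  SimplexCategory.mkHom
    { toFun := fun t =>
        ⟨(Finset.univ.filter fun i : Fin n => i.1 < t.1 ∧ ¬ (w i = Letter.z)).card, by
          have h2 := Finset.card_filter_add_card_filter_not
            (s := (Finset.univ : Finset (Fin n))) (p := fun i => w i = Letter.z)
          have h1 : (Finset.univ.filter fun i : Fin n => i.1 < t.1 ∧ ¬ (w i = Letter.z)).card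
              ≤ (Finset.univ.filter fun i : Fin n => ¬ (w i = Letter.z)).card :=
            Finset.card_le_card (fun x hx => by
              simp only [Finset.mem_filter] at hx ⊢
              exact ⟨hx.1, hx.2.2⟩)
          have h3 : zcount w = (Finset.univ.filter fun i : Fin n => w i = Letter.z).card := rfl
          simp only [Finset.card_univ, Fintype.card_fin] at h2
          omega⟩
      monotone' := by
        intro a b hab
        have h : a.1 ≤ b.1 := hab
        simp only [Fin.mk_le_mk]
        exact Finset.card_le_card (fun x hx => by
          simp only [Finset.mem_filter] at hx ⊢
          exact ⟨hx.1, lt_of_lt_of_le hx.2.1 h, hx.2.2⟩) }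

/-- An edge has finite length if there is a bound on the dimensions of the effective
simplices having it as long edge. -/
def FiniteLength (X : SSet) (a : X _⦋1⦌) : Prop :=
  ∃ N : ℕ, ∀ (n : ℕ) (σ : X _⦋n⦌), Effective X σ →
    X.map (longEdgeMap n).op σ = a → n ≤ N

/-- A *tight* decomposition space: a complete decomposition space in which every edge
has finite length. -/
def Tight (X : SSet) : Prop :=
  IsDecomposition X ∧ Function.Injective (X.σ (0 : Fin 1) : X _⦋0⦌ ⟶ X _⦋1⦌) ∧
    ∀ a : X _⦋1⦌, FiniteLength X a

/-- The length of an edge: the supremum of the dimensions of effective simplices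
having it as long edge. -/
noncomputable def edgeLength (X : SSet) (a : X _⦋1⦌) : ℕ :=
  sSup {n : ℕ | ∃ σ : X _⦋n⦌, Effective X σ ∧ X.map (longEdgeMap n).op σ = a}

/-- A complete simplicial set is *split* if all face maps preserve nondegenerate
simplices. -/
def Split (X : SSet) : Prop :=
  Complete X ∧ ∀ (n : ℕ) (i : Fin (n + 3)) (σ : X _⦋n + 2⦌),
    ¬ Degen X σ → ¬ Degen X (X.δ i σ)

/-- The counit: the indicator function of the degenerate edges. -/
noncomputable def epsFun (X : SSet) : X _⦋1⦌ → ℚ := fun f =>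
  haveI := Classical.propDecidable (f ∈ Set.range (X.σ (0 : Fin 1)))
  if f ∈ Set.range (X.σ (0 : Fin 1)) then 1 else 0

/-- Convolution product on `ℚ`-valued functions on `X₁`. -/
noncomputable def convFun (X : SSet) (φ ψ : X _⦋1⦌ → ℚ) : X _⦋1⦌ → ℚ :=
  fun f => ∑ᶠ σ ∈ (fun τ => X.δ (1 : Fin 3) τ) ⁻¹' {f},
    φ (X.δ (2 : Fin 3) σ) * ψ (X.δ (0 : Fin 3) σ)

/-- The Möbius function `Φ_even - Φ_odd`. -/
noncomputable def muFun (X : SSet) : X _⦋1⦌ → ℚ :=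
  fun f => ∑ᶠ n : ℕ, (-1 : ℚ) ^ n *
    (Nat.card {σ : X.obj (op (SimplexCategory.mk n)) // Effective X σ ∧ X.map (longEdgeMap n).op σ = f} : ℚ)

/-- The category `Δ_inj`: objects those of the simplex category, morphisms the
injective monotone maps. -/
structure DeltaInj : Type where
  /-- the underlying object of the simplex category -/
  obj : SimplexCategory

instance : Category DeltaInj where
  Hom a b := {f : a.obj ⟶ b.obj // Function.Injective f.toOrderHom}
  id a := ⟨𝟙 a.obj, by
    rw [SimplexCategory.id_toOrderHom]
    exact fun x y h => h⟩
  comp f g := ⟨f.1 ≫ g.1, by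
    rw [SimplexCategory.comp_toOrderHom]
    exact fun x y h => f.2 (g.2 h)⟩
  id_comp f := by apply Subtype.ext; simp
  comp_id f := by apply Subtype.ext; simp
  assoc f g h := by apply Subtype.ext; simp

/-- The inclusion functor `Δ_inj ⊆ Δ`. -/
def DeltaInj.incl : DeltaInj ⥤ SimplexCategory where
  obj a := a.obj
  map f := f.1

/-- A *semi-decomposition space*: a semi-simplicial set carrying every pushout in
`Δ_inj` of a generic (inner) face map along a free (outer) face map to a pullback. -/
def IsSemiDecomposition (Z : DeltaInjᵒᵖ ⥤ Type) : Prop :=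
  ∀ ⦃a b c d : DeltaInj⦄ (g : a ⟶ b) (f : a ⟶ c) (h : b ⟶ d) (k : c ⟶ d),
    IsGeneric g.1 → IsFree f.1 → IsPushout g f h k →
    IsPullback (Z.map h.op) (Z.map k.op) (Z.map g.op) (Z.map f.op)

/-- A map of semi-simplicial sets is *ULF* if its naturality squares on all generic
face maps are pullbacks. -/
def IsULF {Z W : DeltaInjᵒᵖ ⥤ Type} (φ : Z ⟶ W) : Prop :=
  ∀ ⦃a b : DeltaInj⦄ (g : a ⟶ b), IsGeneric g.1 →
    IsPullback (φ.app (op b)) (Z.map g.op) (W.map g.op) (φ.app (op a))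

lemma conservative_id (X : SSet) : Conservative (𝟙 X) := by
  intro n i
  exact IsPullback.of_horiz_isIso ⟨by simp⟩

lemma conservative_comp {X Y Z : SSet} {f : X ⟶ Y} {g : Y ⟶ Z}
    (hf : Conservative f) (hg : Conservative g) : Conservative (f ≫ g) := by
  intro n i
  simpa using IsPullback.paste_horiz (hf n i) (hg n i)

lemma isCULF_id (X : SSet) : IsCULF (𝟙 X) := by
  intro a b gm hgm
  exact IsPullback.of_horiz_isIso ⟨by simp⟩

lemma isCULF_comp {X Y Z : SSet} {f : X ⟶ Y} {g : Y ⟶ Z}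
    (hf : IsCULF f) (hg : IsCULF g) : IsCULF (f ≫ g) := by
  intro a b gm hgm
  simpa using IsPullback.paste_horiz (hf gm hgm) (hg gm hgm)

lemma isULF_id (Z : DeltaInjᵒᵖ ⥤ Type) : IsULF (𝟙 Z) := by
  intro a b gm hgm
  exact IsPullback.of_horiz_isIso ⟨by simp⟩

lemma isULF_comp {X Y Z : DeltaInjᵒᵖ ⥤ Type} {f : X ⟶ Y} {g : Y ⟶ Z}
    (hf : IsULF f) (hg : IsULF g) : IsULF (f ≫ g) := by
  intro a b gm hgm
  simpa using IsPullback.paste_horiz (hf gm hgm) (hg gm hgm)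

/-- The category of split simplicial sets and conservative maps. -/
structure SplitSSet : Type 1 where
  /-- the underlying simplicial set -/
  X : SSet.{0}
  split : Split X

instance : Category SplitSSet where
  Hom A B := {f : A.X ⟶ B.X // Conservative f}
  id A := ⟨𝟙 A.X, conservative_id A.X⟩
  comp f g := ⟨f.1 ≫ g.1, conservative_comp f.2 g.2⟩
  id_comp f := by apply Subtype.ext; simp
  comp_id f := by apply Subtype.ext; simp
  assoc f g h := by apply Subtype.ext; simp

/-- The forgetful functor from split simplicial sets to simplicial sets. -/
def SplitSSet.forget : SplitSSet ⥤ SSet where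
  obj A := A.X
  map f := f.1

/-- The category of split decomposition spaces and cULF maps. -/
structure SplitDecomp : Type 1 where
  /-- the underlying simplicial set -/
  X : SSet.{0}
  split : Split X
  decomp : IsDecomposition X

instance : Category SplitDecomp where
  Hom A B := {f : A.X ⟶ B.X // IsCULF f}
  id A := ⟨𝟙 A.X, isCULF_id A.X⟩
  comp f g := ⟨f.1 ≫ g.1, isCULF_comp f.2 g.2⟩
  id_comp f := by apply Subtype.ext; simp
  comp_id f := by apply Subtype.ext; simp
  assoc f g h := by apply Subtype.ext; simp

/-- The forgetful functor from split decomposition spaces to simplicial sets. -/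
def SplitDecomp.forget : SplitDecomp ⥤ SSet where
  obj A := A.X
  map f := f.1

/-- The category of semi-decomposition spaces and ULF maps. -/
structure SemiDecomp : Type 1 where
  /-- the underlying semi-simplicial set -/
  Z : DeltaInjᵒᵖ ⥤ Type
  semidecomp : IsSemiDecomposition Z

instance : Category SemiDecomp where
  Hom A B := {φ : A.Z ⟶ B.Z // IsULF φ}
  id A := ⟨𝟙 A.Z, isULF_id A.Z⟩
  comp f g := ⟨f.1 ≫ g.1, isULF_comp f.2 g.2⟩
  id_comp f := by apply Subtype.ext; simp
  comp_id f := by apply Subtype.ext; simp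
  assoc f g h := by apply Subtype.ext; simp

/-- The forgetful functor from semi-decomposition spaces to semi-simplicial sets. -/
def SemiDecomp.forget : SemiDecomp ⥤ (DeltaInjᵒᵖ ⥤ Type) where
  obj A := A.Z
  map f := f.1


section Helpers

lemma simplexHom_ext' {a b : SimplexCategory} {f g : a ⟶ b}
    (h : ∀ i, (f.toOrderHom i : ℕ) = (g.toOrderHom i : ℕ)) : f = g := by
  apply SimplexCategory.Hom.ext
  apply OrderHom.ext
  funext i
  exact Fin.ext (h i)

lemma sigma_val {n : ℕ} (i : Fin (n+1)) (j : Fin (n+2)) :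
    ((SimplexCategory.σ i).toOrderHom j : ℕ) = if i.1 < j.1 then j.1 - 1 else j.1 := by
  have h : (SimplexCategory.σ i).toOrderHom j = Fin.predAbove i j := rfl
  rw [h]
  unfold Fin.predAbove
  split
  · rename_i h2; rw [if_pos (by simpa [Fin.lt_def] using h2)]; simp
  · rename_i h2; rw [if_neg (by simp [Fin.lt_def] at h2; omega)]; simp

lemma delta_val {n : ℕ} (i : Fin (n+2)) (j : Fin (n+1)) :
    ((SimplexCategory.δ i).toOrderHom j : ℕ) = if j.1 < i.1 then j.1 else j.1 + 1 := by
  have h : (SimplexCategory.δ i).toOrderHom j = Fin.succAbove i j := rfl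
  rw [h]
  unfold Fin.succAbove
  split
  · rename_i h2; rw [if_pos (by simpa [Fin.lt_def] using h2)]; simp
  · rename_i h2; rw [if_neg (by simp [Fin.lt_def] at h2; omega)]; simp

lemma pe_val (n : ℕ) (i : Fin n) (j : Fin 2) :
    ((principalEdge n i).toOrderHom j : ℕ) = i.1 + j.1 := rfl

lemma vm_val (n : ℕ) (i : Fin (n+1)) (j : Fin 1) :
    ((vertexMap n i).toOrderHom j : ℕ) = i.1 := rfl

lemma comp_val {a b c : SimplexCategory} (f : a ⟶ b) (g : b ⟶ c) (j : Fin (a.len + 1)) :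
    ((f ≫ g).toOrderHom j : ℕ) = (g.toOrderHom (f.toOrderHom j) : ℕ) := by
  rw [SimplexCategory.comp_toOrderHom]; rfl

lemma pe_generic : IsGeneric (SimplexCategory.σ (0 : Fin 1)) := by
  constructor <;> (apply Fin.ext; rw [sigma_val]; rfl)

lemma pe_free (n : ℕ) (i : Fin (n+1)) : IsFree (principalEdge (n+1) i) := by
  intro j
  rw [pe_val, pe_val]
  simp

/-- The pushout of the codegeneracy `σ₀ : [1] → [0]` along the free map
`principalEdge (n+1) i` is the collapse `σᵢ : [n+1] → [n]`. -/
lemma fac_left_aux (n : ℕ) (i : Fin (n+1)) {c : SimplexCategory}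
    (inl : (⦋0⦌ : SimplexCategory) ⟶ c) (inr : (⦋n+1⦌ : SimplexCategory) ⟶ c)
    (hcond : SimplexCategory.σ (0 : Fin 1) ≫ inl = principalEdge (n+1) i ≫ inr) :
    vertexMap n i ≫ SimplexCategory.δ i.succ ≫ inr = inl := by
  have key : vertexMap n i ≫ SimplexCategory.δ i.succ
      = SimplexCategory.δ (1 : Fin 2) ≫ principalEdge (n+1) i := by
    apply simplexHom_ext'
    intro j
    have hj : (j : ℕ) = 0 := by
      have := j.isLt; simp only [SimplexCategory.len_mk] at this; omega
    rw [comp_val, comp_val, delta_val, pe_val, delta_val, vm_val]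
    simp only [Fin.val_succ, show ((1 : Fin 2) : ℕ) = 1 from rfl]
    split_ifs <;> omega
  rw [← Category.assoc, key, Category.assoc, ← hcond, ← Category.assoc]
  have hid : SimplexCategory.δ (1 : Fin 2) ≫ SimplexCategory.σ (0 : Fin 1) = 𝟙 _ := by
    apply simplexHom_ext'
    intro j
    have hj : (j : ℕ) = 0 := by
      have := j.isLt; simp only [SimplexCategory.len_mk] at this; omega
    rw [comp_val, sigma_val, delta_val, SimplexCategory.id_toOrderHom]
    simp only [OrderHom.id_coe, id_eq, show ((1 : Fin 2) : ℕ) = 1 from rfl]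
    split_ifs <;> omega
  rw [hid, Category.id_comp]

lemma fac_right_aux (n : ℕ) (i : Fin (n+1)) {c : SimplexCategory}
    (inl : (⦋0⦌ : SimplexCategory) ⟶ c) (inr : (⦋n+1⦌ : SimplexCategory) ⟶ c)
    (hcond : SimplexCategory.σ (0 : Fin 1) ≫ inl = principalEdge (n+1) i ≫ inr) :
    SimplexCategory.σ i ≫ SimplexCategory.δ i.succ ≫ inr = inr := by
  have hpts : ∀ j : Fin (((⦋1⦌:SimplexCategory)).len + 1),
      inr.toOrderHom ((principalEdge (n+1) i).toOrderHom j)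
      = inl.toOrderHom ((SimplexCategory.σ (0:Fin 1)).toOrderHom j) := by
    intro j
    have h := congrArg (fun (f : (⦋1⦌ : SimplexCategory) ⟶ c) => f.toOrderHom j) hcond
    simp only [SimplexCategory.comp_toOrderHom, OrderHom.comp_coe, Function.comp_apply] at h
    exact h.symm
  have hq0 : (0:ℕ) < ((⦋1⦌:SimplexCategory)).len + 1 := by
    simp only [SimplexCategory.len_mk]; omega
  have hq1 : (1:ℕ) < ((⦋1⦌:SimplexCategory)).len + 1 := by
    simp only [SimplexCategory.len_mk]; omega
  set q0 : Fin (((⦋1⦌:SimplexCategory)).len + 1) := ⟨0, hq0⟩ with hq0def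
  set q1 : Fin (((⦋1⦌:SimplexCategory)).len + 1) := ⟨1, hq1⟩ with hq1def
  apply simplexHom_ext'
  intro j
  rw [comp_val, comp_val]
  have hj2 : (j : ℕ) < n + 2 := by
    have := j.isLt; simp only [SimplexCategory.len_mk] at this; omega
  by_cases hj : (j : ℕ) = i.1 + 1
  · have a0 : (SimplexCategory.δ i.succ).toOrderHom ((SimplexCategory.σ i).toOrderHom j)
        = (principalEdge (n+1) i).toOrderHom q0 := by
      apply Fin.ext
      rw [delta_val, pe_val, sigma_val]
      simp only [Fin.val_succ, hq0def]
      split_ifs <;> omega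
    have a1 : j = (principalEdge (n+1) i).toOrderHom q1 := by
      apply Fin.ext
      rw [pe_val]
      simp only [hq1def]
      omega
    have c0 := congrArg Fin.val (hpts q0)
    have c1 := congrArg Fin.val (hpts q1)
    have q01 : (SimplexCategory.σ (0:Fin 1)).toOrderHom q0
        = (SimplexCategory.σ (0:Fin 1)).toOrderHom q1 := by
      apply Fin.ext
      rw [sigma_val, sigma_val]
      simp [hq0def, hq1def]
    have cmid : (inl.toOrderHom ((SimplexCategory.σ (0:Fin 1)).toOrderHom q0) : ℕ)
        = (inl.toOrderHom ((SimplexCategory.σ (0:Fin 1)).toOrderHom q1) : ℕ) :=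
      congrArg (fun x => (inl.toOrderHom x : ℕ)) q01
    have vL := congrArg (fun x => (inr.toOrderHom x : ℕ)) a0
    have vR := congrArg (fun x => (inr.toOrderHom x : ℕ)) a1
    exact vL.trans (c0.trans (cmid.trans (c1.symm.trans vR.symm)))
  · have h1 : (SimplexCategory.δ i.succ).toOrderHom ((SimplexCategory.σ i).toOrderHom j)
        = j := by
      apply Fin.ext
      rw [delta_val]
      have h2 : ((SimplexCategory.σ i).toOrderHom j : ℕ)
          = if i.1 < j.1 then j.1 - 1 else j.1 := sigma_val _ _
      simp only [Fin.val_succ, h2]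
      split_ifs <;> omega
    rw [h1]

lemma pe_pushout (n : ℕ) (i : Fin (n+1)) :
    IsPushout (SimplexCategory.σ (0 : Fin 1)) (principalEdge (n+1) i)
      (vertexMap n i) (SimplexCategory.σ i) := by
  have comm : SimplexCategory.σ (0 : Fin 1) ≫ vertexMap n i
      = principalEdge (n+1) i ≫ SimplexCategory.σ i := by
    apply simplexHom_ext'
    intro j
    have hj : (j : ℕ) < 2 := by have := j.isLt; simpa using this
    rw [comp_val, comp_val, sigma_val, pe_val, vm_val]
    split_ifs <;> omega
  refine IsPushout.of_isColimit (c := PushoutCocone.mk (vertexMap n i) (SimplexCategory.σ i) comm)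
    (PushoutCocone.IsColimit.mk comm
      (fun s => SimplexCategory.δ i.succ ≫ s.inr) ?_ ?_ ?_)
  · intro s
    exact fac_left_aux n i s.inl s.inr s.condition
  · intro s
    exact fac_right_aux n i s.inl s.inr s.condition
  · intro s m hm1 hm2
    have h := congrArg (fun f => SimplexCategory.δ i.succ ≫ f) hm2
    simpa [← Category.assoc, SimplexCategory.δ_comp_σ_succ] using h

/-- The key pullback: `Xₙ ≅ X₀ ×_{X₁} X_{n+1}` via degeneracy and principal edge. -/
lemma key_pullback (X : SSet) (hX : IsDecomposition X) (n : ℕ) (i : Fin (n+1)) :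
    IsPullback (X.map (vertexMap n i).op) (X.map (SimplexCategory.σ i).op)
      (X.map (SimplexCategory.σ (0 : Fin 1)).op) (X.map (principalEdge (n+1) i).op) :=
  hX _ _ _ _ pe_generic (pe_free n i) (pe_pushout n i)

lemma key_iff (X : SSet) (hX : IsDecomposition X) {n : ℕ} (σ : X _⦋n+1⦌) (i : Fin (n+1)) :
    X.map (principalEdge (n + 1) i).op σ ∈ Set.range (X.σ (0 : Fin 1))
      ↔ σ = X.σ i (X.δ i.succ σ) := by
  constructor
  · rintro ⟨x, hx⟩
    have pb := key_pullback X hX n i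
    have w : (TypeCat.ofHom fun _ : PUnit => x) ≫ X.map (SimplexCategory.σ (0 : Fin 1)).op
        = (TypeCat.ofHom fun _ : PUnit => σ) ≫ X.map (principalEdge (n+1) i).op := by
      ext u
      exact hx
    have hτ : X.map (SimplexCategory.σ i).op
        (pb.lift (TypeCat.ofHom fun _ : PUnit => x) (TypeCat.ofHom fun _ : PUnit => σ) w PUnit.unit) = σ := by
      have := pb.lift_snd (TypeCat.ofHom fun _ : PUnit => x) (TypeCat.ofHom fun _ : PUnit => σ) w
      exact congrArg (fun f => f PUnit.unit) this
    set τ := pb.lift (TypeCat.ofHom fun _ : PUnit => x) (TypeCat.ofHom fun _ : PUnit => σ) w PUnit.unit with hτdef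
    have hd : X.δ i.succ σ = τ := by
      rw [← hτ]
      have := X.δ_comp_σ_succ (i := i)
      have h2 := congrFun (congrArg (fun (f : X _⦋n⦌ ⟶ X _⦋n⦌) => (f : X _⦋n⦌ → X _⦋n⦌)) this) τ
      exact h2
    rw [hd]
    exact hτ.symm
  · intro h
    rw [h]
    have comp_eq : X.map (principalEdge (n+1) i).op (X.σ i (X.δ i.succ σ))
        = X.σ (0 : Fin 1) (X.map (vertexMap n i).op (X.δ i.succ σ)) := by
      show (X.map (SimplexCategory.σ i).op ≫ X.map (principalEdge (n+1) i).op) (X.δ i.succ σ)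
        = (X.map (vertexMap n i).op ≫ X.map (SimplexCategory.σ (0 : Fin 1)).op) (X.δ i.succ σ)
      rw [← X.map_comp, ← X.map_comp, ← op_comp, ← op_comp, ← (pe_pushout n i).w]
    rw [comp_eq]
    exact ⟨_, rfl⟩

end Helpers

lemma sigma_def (X : SSet) {k : ℕ} (i : Fin (k+1)) :
    (X.σ i : X _⦋k⦌ ⟶ X _⦋k+1⦌) = X.map (SimplexCategory.σ i).op := rfl

lemma elt_comp (X : SSet) {a b c : SimplexCategory} (f : a ⟶ b) (g : b ⟶ c)
    (x : X.obj (op c)) : X.map f.op (X.map g.op x) = X.map (f ≫ g).op x := by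
  rw [op_comp]
  exact (FunctorToTypes.map_comp_apply X g.op f.op x).symm

lemma pe_comp_sigma (N : ℕ) (m' : Fin (N+1)) (i : Fin (N+1)) (hne : i.1 ≠ m'.1) :
    principalEdge (N+1) i ≫ SimplexCategory.σ m'
      = principalEdge N ⟨if i.1 < m'.1 then i.1 else i.1 - 1, by
          have := i.2; have := m'.2; split_ifs <;> omega⟩ := by
  apply simplexHom_ext'
  intro j
  have hj : (j : ℕ) < 2 := by have := j.isLt; simpa using this
  rw [comp_val, sigma_val, pe_val, pe_val]
  have hi := i.2
  have hm := m'.2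
  simp only
  split_ifs <;> omega

lemma pe_comp_sigma' (N : ℕ) (m' : Fin (N+1)) (i : Fin (N+1)) (j : Fin N)
    (hij : (i:ℕ) = if (j:ℕ) < (m':ℕ) then (j:ℕ) else (j:ℕ) + 1) :
    principalEdge (N+1) i ≫ SimplexCategory.σ m' = principalEdge N j := by
  apply simplexHom_ext'
  intro k
  have hk : (k:ℕ) < 2 := by have := k.isLt; simpa using this
  rw [comp_val, sigma_val, pe_val, pe_val]
  have hjb := j.2
  have hmb := m'.2
  split_ifs at hij ⊢ <;> omega

/-- edges of a degenerate simplex in terms of edges of the lower simplex -/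
lemma edge_of_degen (X : SSet) (N : ℕ) (m' : Fin (N+1)) (i : Fin (N+1)) (j : Fin N)
    (hij : (i:ℕ) = if (j:ℕ) < (m':ℕ) then (j:ℕ) else (j:ℕ) + 1) (τ : X _⦋N⦌) :
    X.map (principalEdge (N+1) i).op (X.σ m' τ) = X.map (principalEdge N j).op τ := by
  rw [sigma_def, elt_comp, pe_comp_sigma' N m' i j hij]


theorem statement2 (X : SSet) (hX : IsDecomposition X)
    (hc : Function.Injective (X.σ (0 : Fin 1) : X _⦋0⦌ ⟶ X _⦋1⦌)) :
    (∀ (m n : ℕ) (v : Fin m → Letter) (v' : Fin n → Letter),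
      wordSet X (splice v Letter.z v')
        = X.σ (⟨m, by omega⟩ : Fin (m + n + 1)) '' wordSet X (concatW v v')) ∧
    (∀ (n : ℕ) (σ : X _⦋n + 1⦌) (i : Fin (n + 1)),
      X.map (principalEdge (n + 1) i).op σ ∈ Set.range (X.σ (0 : Fin 1))
        ↔ σ = X.σ i (X.δ i.succ σ)) := by
  
  refine ⟨?_, fun n σ i => key_iff X hX σ i⟩
  intro m n v v'
  ext σ
  constructor
  · intro hσ
    have hm : X.map (principalEdge (m + n + 1) ⟨m, by omega⟩).op σ
        ∈ Set.range (X.σ (0 : Fin 1)) := by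
      have h := hσ ⟨m, by omega⟩
      have hsp : splice v Letter.z v' ⟨m, by omega⟩ = Letter.z := by
        simp only [splice, Fin.val_mk]
        rw [dif_neg (by omega)]; simp
      rw [hsp] at h
      exact h
    have heq : σ = X.σ ⟨m, by omega⟩ (X.δ (⟨m, by omega⟩ : Fin (m + n + 1)).succ σ) :=
      (key_iff X hX σ ⟨m, by omega⟩).mp hm
    refine ⟨X.δ (⟨m, by omega⟩ : Fin (m + n + 1)).succ σ, ?_, heq.symm⟩
    intro j
    by_cases hjm : (j : ℕ) < m
    · have hcomp := edge_of_degen X (m + n) ⟨m, by omega⟩ ⟨(j : ℕ), by omega⟩ j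
        (by simp only [Fin.val_mk]; rw [if_pos hjm]) (X.δ (⟨m, by omega⟩ : Fin (m + n + 1)).succ σ)
      rw [← heq] at hcomp
      have h := hσ ⟨(j : ℕ), by omega⟩
      rw [hcomp] at h
      have hsp : splice v Letter.z v' ⟨(j : ℕ), by omega⟩ = concatW v v' j := by
        simp only [splice, concatW, Fin.val_mk]
        rw [dif_pos hjm, dif_pos hjm]
      rw [hsp] at h
      exact h
    · have hcomp := edge_of_degen X (m + n) ⟨m, by omega⟩ ⟨(j : ℕ) + 1, by have := j.2; omega⟩ j
        (by simp only [Fin.val_mk]; rw [if_neg hjm]) (X.δ (⟨m, by omega⟩ : Fin (m + n + 1)).succ σ)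
      rw [← heq] at hcomp
      have h := hσ ⟨(j : ℕ) + 1, by have := j.2; omega⟩
      rw [hcomp] at h
      have hsp : splice v Letter.z v' ⟨(j : ℕ) + 1, by have := j.2; omega⟩ = concatW v v' j := by
        simp only [splice, concatW, Fin.val_mk]
        rw [dif_neg (by omega), dif_neg (by omega), dif_neg hjm]
        congr 1
        apply Fin.ext
        simp only [Fin.val_mk]
        omega
      rw [hsp] at h
      exact h
  · rintro ⟨τ, hτ, rfl⟩
    intro i
    by_cases him : (i : ℕ) = m
    · have hsp : splice v Letter.z v' i = Letter.z := by
        simp only [splice]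
        rw [dif_neg (by omega), dif_pos him]
      rw [hsp]
      have hieq : i = ⟨m, by omega⟩ := Fin.ext him
      rw [hieq]
      have hdel : X.δ (⟨m, by omega⟩ : Fin (m + n + 1)).succ
          (X.σ (⟨m, by omega⟩ : Fin (m + n + 1)) τ) = τ := by
        have h := X.δ_comp_σ_succ (i := (⟨m, by omega⟩ : Fin (m + n + 1)))
        exact congrFun (congrArg (fun (f : X _⦋m+n⦌ ⟶ X _⦋m+n⦌)
          => (f : X _⦋m+n⦌ → X _⦋m+n⦌)) h) τ
      exact (key_iff X hX _ ⟨m, by omega⟩).mpr (by rw [hdel])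
    · have hcomp := edge_of_degen X (m + n) ⟨m, by omega⟩ i
        ⟨if (i : ℕ) < m then (i : ℕ) else (i : ℕ) - 1, by
          have := i.2; have h2 := him; split_ifs <;> omega⟩
        (by simp only [Fin.val_mk]; split_ifs <;> omega) τ
      rw [hcomp]
      have h := hτ ⟨if (i : ℕ) < m then (i : ℕ) else (i : ℕ) - 1, by
          have := i.2; have h2 := him; split_ifs <;> omega⟩
      have hsp : concatW v v' ⟨if (i : ℕ) < m then (i : ℕ) else (i : ℕ) - 1, by
          have := i.2; have h2 := him; split_ifs <;> omega⟩ = splice v Letter.z v' i := by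
        simp only [concatW, splice, Fin.val_mk]
        split_ifs <;>
          first
            | (congr 1; apply Fin.ext; simp only [Fin.val_mk]; omega)
            | (exfalso; omega)
            | rfl
      rw [hsp] at h
      exact h
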